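/- The map φ sending a quasi-key tableau T (with first-column entries equal to row indices) to the array obtained by top-justifying the columns of T and sorting each column decreasingly top-to-bottom yields a reverse semistandard Young tableau with the same column sets as T. -/

import Mathlib

open MvPolynomial
open scoped Classical

noncomputable section

/-- Partial sum of the first `k` entries of a weak composition. -/
def psum {n : ℕ} (a : Fin n → ℕ) (k : ℕ) : ℕ :=
  ∑ i ∈ Finset.univ.filter (fun i : Fin n => (i : ℕ) < k), a i

/-- Dominance order: `Dom a b` means `b ≥ a`, i.e. every partial sum of `b`
is at least the corresponding partial sum of `a`. -/
def Dom {n : ℕ} (a b : Fin n → ℕ) : Prop := ∀ k : ℕ, psum a k ≤ psum b k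

/-- `flat a`: the list of nonzero entries of `a`, in order. -/
def flat {n : ℕ} (a : Fin n → ℕ) : List ℕ := (List.ofFn a).filter (· ≠ 0)

/-- The monomial `x^b`. -/
def mono {n : ℕ} (b : Fin n → ℕ) : MvPolynomial (Fin n) ℤ := ∏ i, X i ^ b i

/-- Finite set of weak compositions of length `n` with all entries `≤ N`. -/
def box (n N : ℕ) : Finset (Fin n → ℕ) := Fintype.piFinset fun _ => Finset.range (N + 1)

/-- A single slide move relative to the base composition `a`: a local move
`(…,0,k,…) → (…,i,j,…)` with `i + j = k`.  When `fixed = true` we additionally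
require `j > 0` whenever `k` occupies a position that is nonzero in `a`. -/
def SlideMove {n : ℕ} (a : Fin n → ℕ) (fixed : Bool) (b c : Fin n → ℕ) : Prop :=
  ∃ (p : ℕ) (hp : p + 1 < n) (i j : ℕ),
    b ⟨p, Nat.lt_of_succ_lt hp⟩ = 0 ∧
    i + j = b ⟨p + 1, hp⟩ ∧
    (fixed = true → a ⟨p + 1, hp⟩ ≠ 0 → 0 < j) ∧
    c = Function.update (Function.update b ⟨p, Nat.lt_of_succ_lt hp⟩ i) ⟨p + 1, hp⟩ j

/-- `b` is a slide of `a`. -/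
def Slides {n : ℕ} (a b : Fin n → ℕ) : Prop :=
  Relation.ReflTransGen (SlideMove a false) a b

/-- `b` is a fixed slide of `a`. -/
def FixSlides {n : ℕ} (a b : Fin n → ℕ) : Prop :=
  Relation.ReflTransGen (SlideMove a true) a b

/-- The monomial slide polynomial `M_a`. -/
def Mslide {n : ℕ} (a : Fin n → ℕ) : MvPolynomial (Fin n) ℤ :=
  ∑ b ∈ (box n (∑ i, a i)).filter (fun b => Dom a b ∧ flat b = flat a), mono b

/-- The fundamental slide polynomial `F_a`, as the generating function of slides. -/
def Fslide {n : ℕ} (a : Fin n → ℕ) : MvPolynomial (Fin n) ℤ :=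
  ∑ b ∈ (box n (∑ i, a i)).filter (fun b => Slides a b), mono b

/-- The fundamental particle polynomial `L_a`, the generating function of fixed slides. -/
def Lpart {n : ℕ} (a : Fin n → ℕ) : MvPolynomial (Fin n) ℤ :=
  ∑ b ∈ (box n (∑ i, a i)).filter (fun b => FixSlides a b), mono b

/-- A left swap: exchange entries `b i ≤ b j` with `i < j`. -/
def LSwap {n : ℕ} (b c : Fin n → ℕ) : Prop :=
  ∃ i j : Fin n, i < j ∧ b i ≤ b j ∧
    c = Function.update (Function.update b i (b j)) j (b i)


/-- A quasi-key tableau of shape `a` whose first-column entries equal their row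
index (`qKT^(1)(a)`).  Row `r : Fin n` has index `r + 1` and boxes in columns
`0, …, a r - 1`; entries outside the diagram are `0`. -/
structure QKT1 {n : ℕ} (a : Fin n → ℕ) where
  entry : Fin n → ℕ → ℕ
  pos : ∀ r c, c < a r → 0 < entry r c
  rowDec : ∀ r c, c + 1 < a r → entry r (c + 1) ≤ entry r c
  rowBound : ∀ r c, c < a r → entry r c ≤ (r : ℕ) + 1
  colDistinct : ∀ r r' c, r ≠ r' → c < a r → c < a r' → entry r c ≠ entry r' c
  firstCol : ∀ r, 0 < a r → entry r 0 = (r : ℕ) + 1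
  /-- Condition (3): if entry `i` (in the higher row `r'`) is above entry `k`
  (in row `r`) in the same column with `i < k`, then the box immediately right
  of `k` exists and its entry `j` satisfies `i < j`. -/
  cond3 : ∀ r r' : Fin n, ∀ c, r < r' → c < a r → c < a r' →
    entry r' c < entry r c → c + 1 < a r ∧ entry r' c < entry r (c + 1)
  /-- Condition (4): if the higher row `r'` is strictly longer than the lower
  row `r`, then an entry in column `c` of row `r` is smaller than the entry in
  column `c + 1` of row `r'`. -/
  cond4 : ∀ r r' : Fin n, ∀ c, r < r' → a r < a r' → c < a r → c + 1 < a r' →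
    entry r c < entry r' (c + 1)
  outside : ∀ r c, a r ≤ c → entry r c = 0

/-- The list of entries in column `c` of a filling of `D(a)` (bottom to top). -/
def rawCol {n : ℕ} (a : Fin n → ℕ) (E : Fin n → ℕ → ℕ) (c : ℕ) : List ℕ :=
  (List.finRange n).filterMap fun r => if c < a r then some (E r c) else none

/-- The number of boxes in column `c` of `D(a)`. -/
def colSize {n : ℕ} (a : Fin n → ℕ) (c : ℕ) : ℕ := (rawCol a (fun _ _ => 0) c).length

/-- Column `c` sorted into decreasing order (top-justify and sort each column
decreasingly from the top): this is the `c`-th column of `φ(T)`. -/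
def sortedCol {n : ℕ} (a : Fin n → ℕ) (E : Fin n → ℕ → ℕ) (c : ℕ) : List ℕ :=
  (rawCol a E c).insertionSort (· ≥ ·)

/-- The entry of `φ(T)` in row `k` from the top, column `c`. -/
def phiEntry {n : ℕ} (a : Fin n → ℕ) (E : Fin n → ℕ → ℕ) (k c : ℕ) : ℕ :=
  (sortedCol a E c).getD k 0

section PhiHelpers
variable {n : ℕ}

lemma rawCol_eq_map (a : Fin n → ℕ) (E : Fin n → ℕ → ℕ) (c : ℕ) :
    rawCol a E c =
      ((List.finRange n).filter (fun r => decide (c < a r))).map (fun r => E r c) := by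
  unfold rawCol
  induction List.finRange n with
  | nil => simp
  | cons r l ih => by_cases h : c < a r <;> simp [h, ih]

lemma length_rawCol (a : Fin n → ℕ) (E : Fin n → ℕ → ℕ) (c : ℕ) :
    (rawCol a E c).length = ((List.finRange n).filter (fun r => decide (c < a r))).length := by
  rw [rawCol_eq_map, List.length_map]

lemma colSize_eq (a : Fin n → ℕ) (c : ℕ) :
    colSize a c = ((List.finRange n).filter (fun r => decide (c < a r))).length :=
  length_rawCol a _ c

lemma countP_rawCol (a : Fin n → ℕ) (E : Fin n → ℕ → ℕ) (c : ℕ) (p : ℕ → Bool) :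
    (rawCol a E c).countP p =
      (List.finRange n).countP (fun r => p (E r c) && decide (c < a r)) := by
  rw [rawCol_eq_map, List.countP_map, List.countP_filter]
  rfl

lemma sortedCol_sorted (a : Fin n → ℕ) (E : Fin n → ℕ → ℕ) (c : ℕ) :
    (sortedCol a E c).Pairwise (· ≥ ·) :=
  List.pairwise_insertionSort _ _

lemma sortedCol_perm (a : Fin n → ℕ) (E : Fin n → ℕ → ℕ) (c : ℕ) :
    (sortedCol a E c).Perm (rawCol a E c) :=
  List.perm_insertionSort _ _

lemma sortedCol_length (a : Fin n → ℕ) (E : Fin n → ℕ → ℕ) (c : ℕ) :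
    (sortedCol a E c).length = colSize a c := by
  rw [(sortedCol_perm a E c).length_eq, length_rawCol, colSize_eq]

/-- If `s` is sorted decreasingly, `k < s.length` and `v ≤ s[k]`, then at least `k+1`
entries of `s` are `≥ v`. -/
lemma countP_ge_of_getD (s : List ℕ) (hs : s.Pairwise (· ≥ ·)) (k : ℕ) (hk : k < s.length)
    (v : ℕ) (hv : v ≤ s.getD k 0) : k + 1 ≤ s.countP (fun x => decide (v ≤ x)) := by
  have hsub : (s.take (k + 1)).Sublist s := List.take_sublist _ _
  have hlen : (s.take (k + 1)).length = k + 1 := by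
    rw [List.length_take]; omega
  have hall : ∀ x ∈ s.take (k + 1), (fun x => decide (v ≤ x)) x = true := by
    intro x hx
    obtain ⟨i, hi, rfl⟩ := List.getElem_of_mem hx
    rw [List.getElem_take]
    have hik : i ≤ k := by rw [hlen] at hi; omega
    have hi' : i < s.length := by omega
    have := hs.rel_get_of_le (a := ⟨i, hi'⟩) (b := ⟨k, hk⟩) (by simpa using hik)
    simp only [List.get_eq_getElem] at this
    rw [List.getD_eq_getElem s 0 hk] at hv
    simp only [decide_eq_true_eq]
    omega
  calc k + 1 = (s.take (k + 1)).countP (fun x => decide (v ≤ x)) := by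
        rw [List.countP_eq_length.mpr hall, hlen]
    _ ≤ s.countP _ := hsub.countP_le

/-- If `s` is sorted decreasingly and at least `k+1` entries are `≥ v`, then `v ≤ s[k]`. -/
lemma getD_ge_of_countP (s : List ℕ) (hs : s.Pairwise (· ≥ ·)) (k v : ℕ)
    (h : k + 1 ≤ s.countP (fun x => decide (v ≤ x))) : v ≤ s.getD k 0 := by
  have hk : k < s.length := lt_of_lt_of_le (Nat.lt_of_succ_le h) List.countP_le_length
  by_contra hv
  push_neg at hv
  rw [List.getD_eq_getElem s 0 hk] at hv
  have hzero : (s.drop k).countP (fun x => decide (v ≤ x)) = 0 := by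
    rw [List.countP_eq_zero]
    intro x hx
    obtain ⟨i, hi, rfl⟩ := List.getElem_of_mem hx
    rw [List.getElem_drop]
    have hi' : k + i < s.length := by
      rw [List.length_drop] at hi; omega
    have := hs.rel_get_of_le (a := ⟨k, hk⟩) (b := ⟨k + i, hi'⟩)
      (Fin.mk_le_mk.mpr (Nat.le_add_right k i))
    simp only [List.get_eq_getElem] at this
    simp only [decide_eq_true_eq]
    omega
  have hsplit : s.countP (fun x => decide (v ≤ x)) =
      (s.take k).countP (fun x => decide (v ≤ x)) + (s.drop k).countP (fun x => decide (v ≤ x)) := by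
    conv_lhs => rw [← List.take_append_drop k s]
    rw [List.countP_append]
  have : s.countP (fun x => decide (v ≤ x)) ≤ k := by
    rw [hsplit, hzero]
    have := List.countP_le_length (l := s.take k) (p := fun x => decide (v ≤ x))
    rw [List.length_take] at this
    omega
  omega

end PhiHelpers

/-- for `T ∈ qKT^(1)(a)`, top-justifying the columns of `T` and
sorting each column decreasingly yields a reverse semistandard Young tableau
`φ(T)`: the shape is a partition, rows weakly decrease, columns strictly
decrease top-to-bottom, and the column sets agree with those of `T`. -/

theorem phi_revSSYT {n : ℕ} (a : Fin n → ℕ) (T : QKT1 a) :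
    (∀ c, colSize a (c + 1) ≤ colSize a c) ∧
    (∀ k c, k < colSize a (c + 1) →
      phiEntry a T.entry k (c + 1) ≤ phiEntry a T.entry k c) ∧
    (∀ k c, k + 1 < colSize a c →
      phiEntry a T.entry (k + 1) c < phiEntry a T.entry k c) ∧
    (∀ c, (sortedCol a T.entry c).Perm (rawCol a T.entry c)) := by
  refine ⟨?_, ?_, ?_, fun c => sortedCol_perm a T.entry c⟩
  · -- shape is a partition
    intro c
    rw [colSize_eq, colSize_eq, ← List.countP_eq_length_filter, ← List.countP_eq_length_filter]
    exact List.countP_mono_left fun r _ h => by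
      simp only [decide_eq_true_eq] at *; omega
  · -- rows weakly decrease
    intro k c hk
    set v := phiEntry a T.entry k (c + 1) with hv
    have hk' : k < (sortedCol a T.entry (c + 1)).length := by
      rw [sortedCol_length]; exact hk
    have h1 : k + 1 ≤ (sortedCol a T.entry (c + 1)).countP (fun x => decide (v ≤ x)) :=
      countP_ge_of_getD _ (sortedCol_sorted a T.entry (c + 1)) k hk' v le_rfl
    have h2 : k + 1 ≤ (sortedCol a T.entry c).countP (fun x => decide (v ≤ x)) := by
      rw [(sortedCol_perm a T.entry c).countP_eq, countP_rawCol]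
      rw [(sortedCol_perm a T.entry (c + 1)).countP_eq, countP_rawCol] at h1
      refine le_trans h1 (List.countP_mono_left fun r _ h => ?_)
      simp only [Bool.and_eq_true, decide_eq_true_eq] at h ⊢
      obtain ⟨hle, hlt⟩ := h
      have hc : c < a r := by omega
      exact ⟨le_trans hle (T.rowDec r c hlt), hc⟩
    exact getD_ge_of_countP _ (sortedCol_sorted a T.entry c) k v h2
  · -- columns strictly decrease
    intro k c hk
    have hlen : k + 1 < (sortedCol a T.entry c).length := by
      rw [sortedCol_length]; exact hk
    have hle : phiEntry a T.entry (k + 1) c ≤ phiEntry a T.entry k c := by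
      have := (sortedCol_sorted a T.entry c).rel_get_of_le
        (a := ⟨k, Nat.lt_of_succ_lt hlen⟩) (b := ⟨k + 1, hlen⟩)
        (Fin.mk_le_mk.mpr (Nat.le_succ k))
      simp only [List.get_eq_getElem] at this
      unfold phiEntry
      rw [List.getD_eq_getElem _ 0 hlen, List.getD_eq_getElem _ 0 (Nat.lt_of_succ_lt hlen)]
      exact this
    have hnodup : (sortedCol a T.entry c).Nodup := by
      refine (sortedCol_perm a T.entry c).nodup_iff.mpr ?_
      rw [rawCol_eq_map]
      refine List.Nodup.map_on ?_ (List.Nodup.filter _ (List.nodup_finRange n))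
      intro r hr r' hr' heq
      simp only [List.mem_filter, decide_eq_true_eq] at hr hr'
      by_contra hne
      exact T.colDistinct r r' c hne hr.2 hr'.2 heq
    have hne : phiEntry a T.entry (k + 1) c ≠ phiEntry a T.entry k c := by
      intro heq
      have : (⟨k + 1, hlen⟩ : Fin (sortedCol a T.entry c).length) =
          ⟨k, Nat.lt_of_succ_lt hlen⟩ := by
        refine (hnodup.get_inj_iff).mp ?_
        simp only [List.get_eq_getElem]
        unfold phiEntry at heq
        rw [List.getD_eq_getElem _ 0 hlen, List.getD_eq_getElem _ 0 (Nat.lt_of_succ_lt hlen)] at heq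
        exact heq
      simp at this
    omega


end
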